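/- Auxiliary norm inequality: for any row-stochastic matrix P ∈ ℝ^{|S|×|S|}, γ ∈ (0,1), and nonnegative vector v ∈ ℝ^{|S|}, ‖(I − γP)^{-1} √v‖_∞² ≤ ((1+γ)/(1−γ)) · ‖(I − γ²P)^{-1} v‖_∞, where √v is the entrywise square root. -/

import Mathlib

open Matrix Finset

section Aux

variable {S : Type*} [Fintype S] [DecidableEq S]

private lemma pow_stoch (P : Matrix S S ℝ) (hP0 : ∀ s s', 0 ≤ P s s')
    (hP1 : ∀ s, ∑ s', P s s' = 1) (i : ℕ) :
    (∀ s s', 0 ≤ (P ^ i) s s') ∧ (∀ s, ∑ s', (P ^ i) s s' = 1) := by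
  induction i with
  | zero =>
    refine ⟨fun s s' => ?_, fun s => ?_⟩
    · simp only [pow_zero, Matrix.one_apply]
      split <;> norm_num
    · simp [Matrix.one_apply]
  | succ n ih =>
    rw [pow_succ]
    refine ⟨fun s s' => ?_, fun s => ?_⟩
    · rw [Matrix.mul_apply]
      exact Finset.sum_nonneg fun k _ => mul_nonneg (ih.1 s k) (hP0 k s')
    · simp only [Matrix.mul_apply]
      rw [Finset.sum_comm]
      calc ∑ k, ∑ s', (P ^ n) s k * P k s'
          = ∑ k, (P ^ n) s k * ∑ s', P k s' := by
            simp [Finset.mul_sum]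
        _ = 1 := by simp [hP1, ih.2 s]

/-- Jensen / Cauchy-Schwarz for a stochastic row. -/
private lemma row_jensen (A : Matrix S S ℝ) (h0 : ∀ s s', 0 ≤ A s s')
    (h1 : ∀ s, ∑ s', A s s' = 1) (x : S → ℝ) (s : S) :
    (A.mulVec x s) ^ 2 ≤ A.mulVec (fun s' => x s' ^ 2) s := by
  have key := Finset.sum_mul_sq_le_sq_mul_sq Finset.univ
    (fun s' => Real.sqrt (A s s')) (fun s' => Real.sqrt (A s s') * x s')
  simp only [Matrix.mulVec, dotProduct]
  calc (∑ s', A s s' * x s') ^ 2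
      = (∑ s', Real.sqrt (A s s') * (Real.sqrt (A s s') * x s')) ^ 2 := by
        congr 1; refine Finset.sum_congr rfl fun s' _ => ?_
        rw [← mul_assoc, Real.mul_self_sqrt (h0 s s')]
    _ ≤ (∑ s', Real.sqrt (A s s') ^ 2) * ∑ s', (Real.sqrt (A s s') * x s') ^ 2 := key
    _ = (∑ s', A s s') * ∑ s', A s s' * x s' ^ 2 := by
        congr 1
        · exact Finset.sum_congr rfl fun s' _ => Real.sq_sqrt (h0 s s')
        · refine Finset.sum_congr rfl fun s' _ => ?_
          rw [mul_pow, Real.sq_sqrt (h0 s s')]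
    _ = ∑ s', A s s' * x s' ^ 2 := by rw [h1 s, one_mul]

/-- bound on mulVec for a stochastic matrix. -/
private lemma mulVec_le (A : Matrix S S ℝ) (h0 : ∀ s s', 0 ≤ A s s')
    (h1 : ∀ s, ∑ s', A s s' = 1) {x : S → ℝ} {C : ℝ} (hx : ∀ s', x s' ≤ C) (s : S) :
    A.mulVec x s ≤ C := by
  simp only [Matrix.mulVec, dotProduct]
  calc ∑ s', A s s' * x s' ≤ ∑ s', A s s' * C :=
        Finset.sum_le_sum fun s' _ => mul_le_mul_of_nonneg_left (hx s') (h0 s s')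
    _ = C := by rw [← Finset.sum_mul, h1 s, one_mul]

private lemma mulVec_mono (A : Matrix S S ℝ) (h0 : ∀ s s', 0 ≤ A s s')
    {x y : S → ℝ} (hxy : ∀ s', x s' ≤ y s') (s : S) :
    A.mulVec x s ≤ A.mulVec y s := by
  simp only [Matrix.mulVec, dotProduct]
  exact Finset.sum_le_sum fun s' _ => mul_le_mul_of_nonneg_left (hxy s') (h0 s s')

private lemma mulVec_nonneg (A : Matrix S S ℝ) (h0 : ∀ s s', 0 ≤ A s s')
    {x : S → ℝ} (hx : ∀ s', 0 ≤ x s') (s : S) :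
    0 ≤ A.mulVec x s := by
  simp only [Matrix.mulVec, dotProduct]
  exact Finset.sum_nonneg fun s' _ => mul_nonneg (h0 s s') (hx s')

private lemma summable_entry (P : Matrix S S ℝ) (hP0 : ∀ s s', 0 ≤ P s s')
    (hP1 : ∀ s, ∑ s', P s s' = 1) {c : ℝ} (hc0 : 0 ≤ c) (hc1 : c < 1) (w : S → ℝ) (s : S) :
    Summable fun i : ℕ => c ^ i * ((P ^ i).mulVec w s) := by
  have hg : Summable fun i : ℕ => c ^ i * ‖w‖ :=
    (summable_geometric_of_lt_one hc0 hc1).mul_right _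
  refine Summable.of_norm_bounded hg fun i => ?_
  rw [norm_mul, norm_pow, Real.norm_of_nonneg hc0]
  refine mul_le_mul_of_nonneg_left ?_ (pow_nonneg hc0 i)
  have h0 := (pow_stoch P hP0 hP1 i).1
  have h1 := (pow_stoch P hP0 hP1 i).2
  rw [Real.norm_eq_abs, abs_le]
  constructor
  · simp only [Matrix.mulVec, dotProduct]
    calc -‖w‖ = ∑ s', (P ^ i) s s' * (-‖w‖) := by rw [← Finset.sum_mul, h1 s, one_mul]
      _ ≤ ∑ s', (P ^ i) s s' * w s' := by
          refine Finset.sum_le_sum fun s' _ => mul_le_mul_of_nonneg_left ?_ (h0 s s')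
          have h : |w s'| ≤ ‖w‖ := by simpa [Real.norm_eq_abs] using norm_le_pi_norm w s'
          linarith [neg_abs_le (w s')]
  · exact mulVec_le (P ^ i) h0 h1
      (fun s' => by
        have h : |w s'| ≤ ‖w‖ := by simpa [Real.norm_eq_abs] using norm_le_pi_norm w s'
        linarith [le_abs_self (w s')]) s

private lemma tsum_mulVec (P : Matrix S S ℝ) (hP0 : ∀ s s', 0 ≤ P s s')
    (hP1 : ∀ s, ∑ s', P s s' = 1) {c : ℝ} (hc0 : 0 ≤ c) (hc1 : c < 1) (w : S → ℝ) (s : S) :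
    (∑' i : ℕ, (c • P) ^ i).mulVec w s = ∑' i : ℕ, c ^ i * ((P ^ i).mulVec w s) := by
  have hpow : ∀ i : ℕ, (c • P) ^ i = c ^ i • P ^ i := fun i => smul_pow c P i
  have hentry : ∀ s₀ s₁ : S, Summable fun i : ℕ => c ^ i * (P ^ i) s₀ s₁ := by
    intro s₀ s₁
    refine Summable.of_norm_bounded (summable_geometric_of_lt_one hc0 hc1) fun i => ?_
    rw [norm_mul, norm_pow, Real.norm_of_nonneg hc0]
    have h0 := (pow_stoch P hP0 hP1 i).1 s₀ s₁
    have h1 : (P ^ i) s₀ s₁ ≤ 1 := by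
      calc (P ^ i) s₀ s₁ ≤ ∑ s', (P ^ i) s₀ s' :=
            Finset.single_le_sum (fun k _ => (pow_stoch P hP0 hP1 i).1 s₀ k) (Finset.mem_univ s₁)
        _ = 1 := (pow_stoch P hP0 hP1 i).2 s₀
    calc c ^ i * ‖(P ^ i) s₀ s₁‖ = c ^ i * (P ^ i) s₀ s₁ := by
          rw [Real.norm_of_nonneg h0]
      _ ≤ c ^ i * 1 := mul_le_mul_of_nonneg_left h1 (pow_nonneg hc0 i)
      _ = c ^ i := mul_one _
  have hsum : Summable fun i : ℕ => ((c • P) ^ i : Matrix S S ℝ) := by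
    simp only [hpow]
    refine (Pi.summable (f := fun (i : ℕ) => ((c ^ i • P ^ i : Matrix S S ℝ) : S → S → ℝ))).2
      fun s₀ => ?_
    refine (Pi.summable).2 fun s₁ => ?_
    simpa [Matrix.smul_apply, smul_eq_mul] using hentry s₀ s₁
  have happly : ∀ s₀ s₁ : S, (∑' i : ℕ, (c • P) ^ i) s₀ s₁ = ∑' i : ℕ, c ^ i * (P ^ i) s₀ s₁ := by
    intro s₀ s₁
    have h1 := tsum_apply (f := fun (i : ℕ) => ((c • P) ^ i : Matrix S S ℝ)) (x := s₀) hsum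
    have h2 := tsum_apply (f := fun (i : ℕ) => (((c • P) ^ i : Matrix S S ℝ) s₀ : S → ℝ))
      (x := s₁) ((Pi.summable).1 hsum s₀)
    calc (∑' i : ℕ, (c • P) ^ i) s₀ s₁ = (∑' i : ℕ, ((c • P) ^ i : Matrix S S ℝ) s₀) s₁ := by
          exact congrFun h1 s₁
      _ = ∑' i : ℕ, ((c • P) ^ i : Matrix S S ℝ) s₀ s₁ := h2
      _ = ∑' i : ℕ, c ^ i * (P ^ i) s₀ s₁ := by
          refine tsum_congr fun i => ?_
          rw [hpow i]; simp [Matrix.smul_apply, smul_eq_mul]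
  simp only [Matrix.mulVec, dotProduct]
  calc ∑ s', (∑' i : ℕ, (c • P) ^ i) s s' * w s'
      = ∑ s', ∑' i : ℕ, c ^ i * (P ^ i) s s' * w s' := by
        refine Finset.sum_congr rfl fun s' _ => ?_
        rw [happly s s', tsum_mul_right]
    _ = ∑' i : ℕ, ∑ s', c ^ i * (P ^ i) s s' * w s' := by
        refine (Summable.tsum_finsetSum fun s' _ => ?_).symm
        exact (hentry s s').mul_right (w s')
    _ = ∑' i : ℕ, c ^ i * ∑ s', (P ^ i) s s' * w s' := by
        refine tsum_congr fun i => ?_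
        rw [Finset.mul_sum]
        exact Finset.sum_congr rfl fun s' _ => by ring

private lemma partial_rec (P : Matrix S S ℝ) (c : ℝ) (w : S → ℝ) (n : ℕ) (s : S) :
    ∑ i ∈ Finset.range (n + 1), c ^ i * ((P ^ i).mulVec w s)
      = w s + c * P.mulVec (fun s' => ∑ i ∈ Finset.range n, c ^ i * ((P ^ i).mulVec w s')) s := by
  rw [Finset.sum_range_succ']
  simp only [pow_zero, one_mul, Matrix.one_mulVec]
  rw [add_comm]
  congr 1
  have hterm : ∀ i : ℕ, c ^ (i + 1) * ((P ^ (i + 1)).mulVec w s)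
      = c ^ (i + 1) * (P.mulVec ((P ^ i).mulVec w) s) := by
    intro i
    rw [pow_succ' P i, ← Matrix.mulVec_mulVec]
  calc ∑ i ∈ Finset.range n, c ^ (i + 1) * ((P ^ (i + 1)).mulVec w s)
      = ∑ i ∈ Finset.range n, c ^ (i + 1) * (P.mulVec ((P ^ i).mulVec w) s) :=
        Finset.sum_congr rfl fun i _ => hterm i
    _ = c * P.mulVec (fun s' => ∑ i ∈ Finset.range n, c ^ i * ((P ^ i).mulVec w s')) s := by
        simp only [Matrix.mulVec, dotProduct, Finset.mul_sum]
        rw [Finset.sum_comm]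
        refine Finset.sum_congr rfl fun s' _ => ?_
        refine Finset.sum_congr rfl fun i _ => ?_
        refine Finset.sum_congr rfl fun k _ => ?_
        ring

end Aux

theorem neumann_sqrt_norm_inequality
    {S : Type*} [Fintype S] [DecidableEq S]
    (γ : ℝ) (hγ0 : 0 < γ) (hγ1 : γ < 1)
    (P : Matrix S S ℝ)
    (hP0 : ∀ s s', 0 ≤ P s s') (hP1 : ∀ s, ∑ s', P s s' = 1)
    (v : S → ℝ) (hv : ∀ s, 0 ≤ v s) :
    ‖(∑' i : ℕ, (γ • P) ^ i).mulVec (fun s => Real.sqrt (v s))‖ ^ 2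
      ≤ ((1 + γ) / (1 - γ)) * ‖(∑' i : ℕ, ((γ ^ 2) • P) ^ i).mulVec v‖ := by
  have hγ1' : 0 < 1 - γ := by linarith
  have hγ2a : (0 : ℝ) ≤ γ ^ 2 := sq_nonneg γ
  have hγ2b : γ ^ 2 < 1 := by nlinarith
  set w : S → ℝ := fun s => Real.sqrt (v s) with hwdef
  have hstoch := pow_stoch P hP0 hP1
  set M : ℝ := ‖(∑' i : ℕ, ((γ ^ 2) • P) ^ i).mulVec v‖ with hMdef
  have hM0 : 0 ≤ M := norm_nonneg _
  set x : S → ℝ := fun s => ∑' i : ℕ, γ ^ i * ((P ^ i).mulVec w s) with hxdef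
  set u : S → ℝ := fun s => ∑' i : ℕ, (γ ^ 2) ^ i * ((P ^ i).mulVec v s) with hudef
  have hxeq : (∑' i : ℕ, (γ • P) ^ i).mulVec w = x :=
    funext fun s => tsum_mulVec P hP0 hP1 hγ0.le hγ1 w s
  have hueq : ∀ s, (∑' i : ℕ, ((γ ^ 2) • P) ^ i).mulVec v s = u s :=
    fun s => tsum_mulVec P hP0 hP1 hγ2a hγ2b v s
  set X : ℕ → S → ℝ := fun n s => ∑ i ∈ Finset.range n, γ ^ i * ((P ^ i).mulVec w s) with hXdef
  set U : ℕ → S → ℝ := fun n s => ∑ i ∈ Finset.range n, (γ ^ 2) ^ i * ((P ^ i).mulVec v s)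
    with hUdef
  have hsumX : ∀ s, Summable fun i : ℕ => γ ^ i * ((P ^ i).mulVec w s) :=
    fun s => summable_entry P hP0 hP1 hγ0.le hγ1 w s
  have hsumU : ∀ s, Summable fun i : ℕ => (γ ^ 2) ^ i * ((P ^ i).mulVec v s) :=
    fun s => summable_entry P hP0 hP1 hγ2a hγ2b v s
  have hUterm : ∀ (i : ℕ) (s : S), 0 ≤ (γ ^ 2) ^ i * ((P ^ i).mulVec v s) :=
    fun i s => mul_nonneg (pow_nonneg hγ2a i)
      (mulVec_nonneg _ ((hstoch i).1) hv s)
  have huM : ∀ s, u s ≤ M := by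
    intro s
    rw [← hueq s]
    exact le_trans (le_abs_self _) (by
      simpa [Real.norm_eq_abs] using norm_le_pi_norm ((∑' i : ℕ, ((γ ^ 2) • P) ^ i).mulVec v) s)
  have hUM : ∀ n s, U n s ≤ M := by
    intro n s
    refine le_trans ?_ (huM s)
    exact Summable.sum_le_tsum (Finset.range n) (fun i _ => hUterm i s) (hsumU s)
  have hUnn : ∀ n s, 0 ≤ U n s := fun n s =>
    Finset.sum_nonneg fun i _ => hUterm i s
  have hXnn : ∀ n s, 0 ≤ X n s := fun n s =>
    Finset.sum_nonneg fun i _ => mul_nonneg (pow_nonneg hγ0.le i)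
      (mulVec_nonneg _ ((hstoch i).1) (fun s' => Real.sqrt_nonneg _) s)
  -- key invariant
  have inv : ∀ n s, (1 - γ) * (X n s) ^ 2 ≤ U n s + γ * M := by
    intro n
    induction n with
    | zero =>
      intro s
      simp only [hXdef, hUdef, Finset.range_zero, Finset.sum_empty]
      nlinarith
    | succ n ih =>
      intro s
      have hX : X (n + 1) s = w s + γ * P.mulVec (X n) s := partial_rec P γ w n s
      have hU : U (n + 1) s = v s + γ ^ 2 * P.mulVec (U n) s := partial_rec P (γ ^ 2) v n s
      set a := w s with ha
      set b := P.mulVec (X n) s with hb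
      set PU := P.mulVec (U n) s with hPUdef
      set J := P.mulVec (fun s' => X n s' ^ 2) s with hJ
      have ha2 : a ^ 2 = v s := Real.sq_sqrt (hv s)
      have hb2 : b ^ 2 ≤ J := row_jensen P hP0 hP1 (X n) s
      have hbnn : 0 ≤ b := mulVec_nonneg _ hP0 (hXnn n) s
      have hJnn : 0 ≤ J := mulVec_nonneg _ hP0 (fun s' => sq_nonneg _) s
      have hPUnn : 0 ≤ PU := mulVec_nonneg _ hP0 (hUnn n) s
      have hPUM : PU ≤ M := mulVec_le P hP0 hP1 (fun s' => hUM n s') s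
      have hPXinv : (1 - γ) * J ≤ PU + γ * M := by
        have step : ∀ s', (1 - γ) * (X n s' ^ 2) ≤ U n s' + γ * M := fun s' => ih s'
        have h1 : P.mulVec (fun s' => (1 - γ) * X n s' ^ 2) s
            ≤ P.mulVec (fun s' => U n s' + γ * M) s :=
          mulVec_mono P hP0 step s
        have h2 : P.mulVec (fun s' => (1 - γ) * X n s' ^ 2) s = (1 - γ) * J := by
          simp only [hJ, Matrix.mulVec, dotProduct, Finset.mul_sum]
          exact Finset.sum_congr rfl fun s' _ => by ring
        have h3 : P.mulVec (fun s' => U n s' + γ * M) s = PU + γ * M := by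
          simp only [hPUdef, Matrix.mulVec, dotProduct]
          calc ∑ s', P s s' * (U n s' + γ * M)
              = (∑ s', P s s' * U n s') + (∑ s', P s s') * (γ * M) := by
                rw [Finset.sum_mul, ← Finset.sum_add_distrib]
                exact Finset.sum_congr rfl fun s' _ => by ring
            _ = PU + γ * M := by rw [hP1 s, one_mul]; rfl
        rw [← h2, ← h3]
        exact h1
      rw [hX, hU]
      have hkey : (1 - γ) * (a + γ * b) ^ 2 ≤ a ^ 2 + γ * (1 - γ) * b ^ 2 := by
        nlinarith [sq_nonneg (a - (1 - γ) * b), hγ0.le]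
      have hc1 : γ * (1 - γ) * b ^ 2 ≤ γ * (1 - γ) * J := by
        have := mul_le_mul_of_nonneg_left hb2 (by positivity : (0:ℝ) ≤ γ * (1 - γ))
        linarith
      have hc2 : γ * ((1 - γ) * J) ≤ γ * (PU + γ * M) :=
        mul_le_mul_of_nonneg_left hPXinv hγ0.le
      have hc3 : γ * (1 - γ) * PU ≤ γ * (1 - γ) * M := by
        have := mul_le_mul_of_nonneg_left hPUM (by positivity : (0:ℝ) ≤ γ * (1 - γ))
        linarith
      nlinarith
  -- pass to the limit
  have hxle : ∀ s, (1 - γ) * (x s) ^ 2 ≤ (1 + γ) * M := by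
    intro s
    have htend : Filter.Tendsto (fun n => X n s) Filter.atTop (nhds (x s)) :=
      (hsumX s).hasSum.tendsto_sum_nat
    have htend2 : Filter.Tendsto (fun n => (1 - γ) * (X n s) ^ 2) Filter.atTop
        (nhds ((1 - γ) * (x s) ^ 2)) := ((htend.pow 2).const_mul _)
    refine le_of_tendsto htend2 (Filter.Eventually.of_forall fun n => ?_)
    have h1 := inv n s
    have h2 := hUM n s
    nlinarith
  -- conclude
  rw [hxeq]
  set R : ℝ := ((1 + γ) / (1 - γ)) * M with hR
  have hRnn : 0 ≤ R := mul_nonneg (div_nonneg (by linarith) hγ1'.le) hM0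
  have hx2R : ∀ s, (x s) ^ 2 ≤ R := by
    intro s
    rw [hR, div_mul_eq_mul_div, le_div_iff₀ hγ1']
    nlinarith [hxle s]
  have hnorm : ‖x‖ ≤ Real.sqrt R := by
    refine (pi_norm_le_iff_of_nonneg (Real.sqrt_nonneg _)).2 fun s => ?_
    rw [Real.norm_eq_abs, ← Real.sqrt_sq_eq_abs]
    exact Real.sqrt_le_sqrt (hx2R s)
  calc ‖x‖ ^ 2 ≤ Real.sqrt R ^ 2 := by
        exact pow_le_pow_left₀ (norm_nonneg _) hnorm 2
    _ = R := Real.sq_sqrt hRnn
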